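/- (Section 7(v), Demoulin reduction) Suppose τ : ℤ → ℝ² → ℝ is a family of positive twice continuously differentiable functions satisfying the 2D Toda tau-function equation ∂_u∂_v ln τ_n = 1 − τ_{n−1}τ_{n+1}/τ_n², together with the symmetry τ_{−n+1} = τ_n and the 6-periodicity τ_{n+6} = τ_n for all n ∈ ℤ. Define h = τ₂/τ₁ and k = τ₂/τ₃. Then (h,k) satisfies the Demoulin system: ∂_u∂_v ln h = h − 1/(h·k) and ∂_u∂_v ln k = k − 1/(k·h). Moreover, setting h_n = τ_{n+1}τ_{n−1}/τ_n², one has h₁ = h₀, h₂ = h₅, h₃ = h₄ and h₁·h₂·h₃ = 1. -/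

import Mathlib

open Function


/-- Mixed second partial derivative ∂_u∂_v of a real-valued function of two real variables. -/
noncomputable def mixedDerivR (f : ℝ → ℝ → ℝ) (u v : ℝ) : ℝ :=
  deriv (fun u' => deriv (fun v' => f u' v') v) u

lemma slice_deriv_eq (F : ℝ → ℝ → ℝ) (hF : ContDiff ℝ 2 (uncurry F)) (u v : ℝ) :
    deriv (fun v' => F u v') v = fderiv ℝ (uncurry F) (u, v) (0, 1) := by
  have hd : HasFDerivAt (uncurry F) (fderiv ℝ (uncurry F) (u, v)) (u, v) :=
    (hF.differentiable (by norm_num) (u, v)).hasFDerivAt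
  have h2 : HasFDerivAt (fun v' : ℝ => ((u, v') : ℝ × ℝ))
      (ContinuousLinearMap.inr ℝ ℝ ℝ) v := hasFDerivAt_prodMk_right u v
  have h3 : HasDerivAt (fun v' => F u v')
      (((fderiv ℝ (uncurry F) (u, v)).comp (ContinuousLinearMap.inr ℝ ℝ ℝ)) 1) v :=
    (hd.comp v h2).hasDerivAt
  simpa using h3.deriv

lemma phi_diff (F : ℝ → ℝ → ℝ) (hF : ContDiff ℝ 2 (uncurry F)) (v : ℝ) :
    Differentiable ℝ (fun u' => fderiv ℝ (uncurry F) (u', v) (0, 1)) := by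
  have h1 : ContDiff ℝ 1 (fun p : ℝ × ℝ => fderiv ℝ (uncurry F) p) :=
    (hF.fderiv_right (m := 1) le_rfl)
  have h2 : ContDiff ℝ 1 (fun p : ℝ × ℝ => fderiv ℝ (uncurry F) p ((0 : ℝ), (1 : ℝ))) :=
    (ContinuousLinearMap.apply ℝ ℝ ((0 : ℝ), (1 : ℝ))).contDiff.comp h1
  have h3 : ContDiff ℝ 1 (fun u' : ℝ => fderiv ℝ (uncurry F) (u', v) ((0:ℝ), (1:ℝ))) :=
    h2.comp (contDiff_id.prodMk contDiff_const)
  exact h3.differentiable (by norm_num)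

lemma mixed_eq (F : ℝ → ℝ → ℝ) (hF : ContDiff ℝ 2 (uncurry F)) (u v : ℝ) :
    mixedDerivR F u v = deriv (fun u' => fderiv ℝ (uncurry F) (u', v) (0, 1)) u := by
  unfold mixedDerivR
  congr 1
  funext u'
  exact slice_deriv_eq F hF u' v

lemma slice_diffAt (F : ℝ → ℝ → ℝ) (hF : ContDiff ℝ 2 (uncurry F)) (u v : ℝ) :
    DifferentiableAt ℝ (fun v' => F u v') v := by
  have := ((hF.differentiable (by norm_num)).comp
    ((differentiable_const u).prodMk differentiable_id)) v
  exact this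

lemma mixedDerivR_sub (F G : ℝ → ℝ → ℝ) (hF : ContDiff ℝ 2 (uncurry F))
    (hG : ContDiff ℝ 2 (uncurry G)) (u v : ℝ) :
    mixedDerivR (fun u' v' => F u' v' - G u' v') u v
      = mixedDerivR F u v - mixedDerivR G u v := by
  have hinner : (fun u' => deriv (fun v' => F u' v' - G u' v') v)
      = fun u' => fderiv ℝ (uncurry F) (u', v) (0, 1) - fderiv ℝ (uncurry G) (u', v) (0, 1) := by
    funext u'
    rw [deriv_fun_sub (slice_diffAt F hF u' v) (slice_diffAt G hG u' v),
      slice_deriv_eq F hF u' v, slice_deriv_eq G hG u' v]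
  unfold mixedDerivR
  rw [hinner, deriv_fun_sub ((phi_diff F hF v) u) ((phi_diff G hG v) u),
    ← mixed_eq F hF u v, ← mixed_eq G hG u v]
  rfl

/-- Section 7(v), Demoulin reduction: if τ is a positive C² solution of the 2D Toda
tau-function equation with the symmetry τ₋ₙ₊₁ = τₙ and 6-periodicity τₙ₊₆ = τₙ, then
h = τ₂/τ₁ and k = τ₂/τ₃ satisfy the Demoulin system, and the quantities
hₙ = τₙ₊₁τₙ₋₁/τₙ² satisfy h₁ = h₀, h₂ = h₅, h₃ = h₄ and h₁h₂h₃ = 1. -/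
theorem demoulin_reduction (τ : ℤ → ℝ → ℝ → ℝ)
    (hpos : ∀ (n : ℤ) (u v : ℝ), 0 < τ n u v)
    (hC2 : ∀ n : ℤ, ContDiff ℝ 2 (Function.uncurry (τ n)))
    (hToda : ∀ (n : ℤ) (u v : ℝ),
      mixedDerivR (fun u' v' => Real.log (τ n u' v')) u v
        = 1 - τ (n - 1) u v * τ (n + 1) u v / (τ n u v) ^ 2)
    (hsym : ∀ (n : ℤ) (u v : ℝ), τ (-n + 1) u v = τ n u v)
    (hper : ∀ (n : ℤ) (u v : ℝ), τ (n + 6) u v = τ n u v)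
    (h k : ℝ → ℝ → ℝ)
    (hh : ∀ u v, h u v = τ 2 u v / τ 1 u v)
    (hk : ∀ u v, k u v = τ 2 u v / τ 3 u v)
    (hosc : ℤ → ℝ → ℝ → ℝ)
    (hhosc : ∀ (n : ℤ) (u v : ℝ),
      hosc n u v = τ (n + 1) u v * τ (n - 1) u v / (τ n u v) ^ 2) :
    (∀ u v : ℝ, mixedDerivR (fun u' v' => Real.log (h u' v')) u v
        = h u v - 1 / (h u v * k u v))
    ∧ (∀ u v : ℝ, mixedDerivR (fun u' v' => Real.log (k u' v')) u v
        = k u v - 1 / (k u v * h u v))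
    ∧ (∀ u v : ℝ, hosc 1 u v = hosc 0 u v ∧ hosc 2 u v = hosc 5 u v ∧ hosc 3 u v = hosc 4 u v)
    ∧ (∀ u v : ℝ, hosc 1 u v * hosc 2 u v * hosc 3 u v = 1) := by
  -- index identities
  have e01 : ∀ u v, τ 1 u v = τ 0 u v := by
    intro u v; have := hsym 0 u v; norm_num at this; exact this
  have e43 : ∀ u v, τ 4 u v = τ 3 u v := by
    intro u v
    have h1 := hsym (-3) u v; norm_num at h1
    have h2 := hper (-3) u v; norm_num at h2
    rw [h1, ← h2]
  have em12 : ∀ u v, τ (-1) u v = τ 2 u v := by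
    intro u v; have := hsym 2 u v; norm_num at this; exact this
  have e52 : ∀ u v, τ 5 u v = τ 2 u v := by
    intro u v
    have h1 := hper (-1) u v; norm_num at h1
    rw [h1, em12]
  have e60 : ∀ u v, τ 6 u v = τ 0 u v := by
    intro u v; have := hper 0 u v; norm_num at this; exact this
  -- log τ is C²
  have hL : ∀ n : ℤ, ContDiff ℝ 2 (uncurry fun u v => Real.log (τ n u v)) := by
    intro n
    rw [contDiff_iff_contDiffAt]
    intro p
    exact (Real.contDiffAt_log.2 (hpos n p.1 p.2).ne').comp p ((hC2 n).contDiffAt)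
  have hne : ∀ (n : ℤ) (u v : ℝ), τ n u v ≠ 0 := fun n u v => (hpos n u v).ne'
  refine ⟨?_, ?_, ?_, ?_⟩
  · intro u v
    have hfun : (fun u' v' => Real.log (h u' v'))
        = fun u' v' => Real.log (τ 2 u' v') - Real.log (τ 1 u' v') := by
      funext u' v'
      rw [hh, Real.log_div (hne 2 u' v') (hne 1 u' v')]
    rw [hfun, mixedDerivR_sub _ _ (hL 2) (hL 1)]
    have t2 := hToda 2 u v; norm_num at t2
    have t1 := hToda 1 u v; norm_num at t1
    rw [t2, t1, hh, hk, e01 u v]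
    have n0 := hne 0 u v; have n2 := hne 2 u v; have n3 := hne 3 u v
    field_simp
    ring
  · intro u v
    have hfun : (fun u' v' => Real.log (k u' v'))
        = fun u' v' => Real.log (τ 2 u' v') - Real.log (τ 3 u' v') := by
      funext u' v'
      rw [hk, Real.log_div (hne 2 u' v') (hne 3 u' v')]
    rw [hfun, mixedDerivR_sub _ _ (hL 2) (hL 3)]
    have t2 := hToda 2 u v; norm_num at t2
    have t3 := hToda 3 u v; norm_num at t3
    rw [t2, t3, hh, hk, e43 u v]
    have n1 := hne 1 u v; have n2 := hne 2 u v; have n3 := hne 3 u v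
    field_simp
    ring
  · intro u v
    refine ⟨?_, ?_, ?_⟩
    · have a := hhosc 1 u v; have b := hhosc 0 u v
      norm_num at a b
      rw [a, b, e01 u v, em12 u v]; ring
    · have a := hhosc 2 u v; have b := hhosc 5 u v
      norm_num at a b
      rw [a, b, e52 u v, e60 u v, e43 u v, ← e01 u v]
      ring
    · have a := hhosc 3 u v; have b := hhosc 4 u v
      norm_num at a b
      rw [a, b, e52 u v, e43 u v]; ring
  · intro u v
    have a := hhosc 1 u v; have b := hhosc 2 u v; have c := hhosc 3 u v
    norm_num at a b c
    rw [a, b, c, e01 u v, e43 u v]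
    have n0 := hne 0 u v; have n2 := hne 2 u v; have n3 := hne 3 u v
    field_simp
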